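/- Let L be a finite geometric lattice of rank r with the minimal labeling λ induced by a linear order on its atoms, and let M be a maximal chain whose label sequence is a rearrangement of the label sequence of the unique ascending chain of L. Suppose u_{i-1} ⋖ u_i ⋖ u_{i+1} are consecutive elements of M with a descent λ(u_{i-1},u_i) > λ(u_i,u_{i+1}). Then the pair (λ(u_i,u_{i+1}), λ(u_{i-1},u_i)) is the lexicographically smallest label sequence of any saturated chain from u_{i-1} to u_{i+1}; in particular there exists v with u_{i-1} ⋖ v ⋖ u_{i+1}, λ(u_{i-1},v) = λ(u_i,u_{i+1}) and λ(v,u_{i+1}) = λ(u_{i-1},u_i). -/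

import Mathlib

/-- A finite bounded lattice is *geometric* if it is atomistic (every element is a join
of atoms) and semimodular (whenever distinct `y`, `y'` both cover `x`, the join `y ⊔ y'`
covers both). -/
def IsGeometricLattice (L : Type*) [Lattice L] [BoundedOrder L] : Prop :=
  (∀ x : L, ∃ s : Finset L, (∀ a ∈ s, IsAtom a) ∧ s.sup id = x) ∧
  (∀ x y y' : L, y ≠ y' → x ⋖ y → x ⋖ y' → y ⋖ (y ⊔ y') ∧ y' ⋖ (y ⊔ y'))

/-- `lab` is the minimal labeling induced by the linear order on the atoms of `L`
represented by the function `f` (injective on atoms): for every cover relation `u ⋖ v`,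
`lab u v` is the atom `a ≤ v` with `a ≰ u` having the least value of `f`. -/
def IsMinimalLabeling {L : Type*} [Lattice L] [OrderBot L] (f : L → ℕ) (lab : L → L → L) : Prop :=
  ∀ u v : L, u ⋖ v →
    IsAtom (lab u v) ∧ lab u v ≤ v ∧ ¬ lab u v ≤ u ∧
    ∀ a : L, IsAtom a → a ≤ v → ¬ a ≤ u → f (lab u v) ≤ f a

/-- `g` is a maximal chain `⊥ = g 0 ⋖ g 1 ⋖ ⋯ ⋖ g r = ⊤`. -/
def IsMaxChainFun {L : Type*} [PartialOrder L] [BoundedOrder L] (r : ℕ)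
    (g : Fin (r+1) → L) : Prop :=
  g 0 = ⊥ ∧ g (Fin.last r) = ⊤ ∧ ∀ i : Fin r, g i.castSucc ⋖ g i.succ

/-- The label sequence of the maximal chain `g` with respect to the labeling `lab`. -/
def labelSeq {L : Type*} (lab : L → L → L) {r : ℕ} (g : Fin (r+1) → L) (i : Fin r) : L :=
  lab (g i.castSucc) (g i.succ)

section Aux

variable {L : Type*} [Lattice L] [BoundedOrder L]

set_option linter.unusedSectionVars false

lemma covSupFinset (hgeo : IsGeometricLattice L) (A : Finset L) (hA : ∀ e ∈ A, IsAtom e) :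
    ∀ d : L, IsAtom d → d ≤ A.sup id ∨ A.sup id ⋖ A.sup id ⊔ d := by
  classical
  induction A using Finset.induction_on with
  | empty => intro d hd; right; simpa using hd.bot_covBy
  | @insert e A he ih =>
    have hA' : ∀ x ∈ A, IsAtom x := fun x hx => hA x (Finset.mem_insert_of_mem hx)
    intro d hd
    by_cases hda : d ≤ (insert e A).sup id
    · exact Or.inl hda
    right
    rw [Finset.sup_insert, id] at *
    by_cases hes : e ≤ A.sup id
    · rw [sup_eq_right.mpr hes] at *
      rcases ih hA' d hd with h | h
      · exact absurd h hda
      · exact h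
    · have hce : A.sup id ⋖ A.sup id ⊔ e := by
        rcases ih hA' e (hA e (Finset.mem_insert_self _ _)) with h' | h'
        · exact absurd h' hes
        · exact h'
      have hcd : A.sup id ⋖ A.sup id ⊔ d := by
        rcases ih hA' d hd with h' | h'
        · exact absurd (h'.trans le_sup_right) hda
        · exact h'
      have hne : A.sup id ⊔ d ≠ A.sup id ⊔ e := by
        intro h
        apply hda
        have hde : d ≤ A.sup id ⊔ e := h ▸ le_sup_right
        rwa [sup_comm (A.sup id) e] at hde
      have hcov := (hgeo.2 (A.sup id) (A.sup id ⊔ d) (A.sup id ⊔ e) hne hcd hce).2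
      have h2 : A.sup id ⊔ d ⊔ (A.sup id ⊔ e) = A.sup id ⊔ e ⊔ d := by
        rw [sup_sup_sup_comm, sup_idem, sup_comm d e, ← sup_assoc]
      rw [h2] at hcov
      rw [sup_comm e (A.sup id)]
      exact hcov

lemma covSupAtom (hgeo : IsGeometricLattice L) (s d : L) (hd : IsAtom d) (h : ¬ d ≤ s) :
    s ⋖ s ⊔ d := by
  obtain ⟨A, hA, rfl⟩ := hgeo.1 s
  rcases covSupFinset hgeo A hA d hd with h' | h'
  · exact absurd h' h
  · exact h'

lemma satChainExists (hgeo : IsGeometricLattice L) (A : Finset L) (hA : ∀ e ∈ A, IsAtom e)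
    (s : L) :
    ∃ c : Set L, c.Finite ∧ IsChain (· ≤ ·) c ∧ s ∈ c ∧ (s ⊔ A.sup id) ∈ c ∧
      (∀ z ∈ c, s ≤ z ∧ z ≤ s ⊔ A.sup id) ∧
      (∀ z, s ≤ z → z ≤ s ⊔ A.sup id → (∀ w ∈ c, z ≤ w ∨ w ≤ z) → z ∈ c) ∧
      c.ncard ≤ A.card + 1 := by
  classical
  induction A using Finset.induction_on with
  | empty =>
    refine ⟨{s}, Set.finite_singleton s, Set.Subsingleton.isChain (by simp), rfl, by simp, ?_, ?_, by simp⟩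
    · intro z hz; simp at hz; simp [hz]
    · intro z h1 h2 _
      simp only [Finset.sup_empty, sup_bot_eq] at h2
      simp [le_antisymm h2 h1]
  | @insert d A hd ih =>
    obtain ⟨c, hfin, hch, hsmem, htmem, hbd, hsat, hcard⟩ := ih (fun x hx => hA x (Finset.mem_insert_of_mem hx))
    have hdA : IsAtom d := hA d (Finset.mem_insert_self _ _)
    have hsup : s ⊔ (insert d A).sup id = (s ⊔ A.sup id) ⊔ d := by
      rw [Finset.sup_insert, id]
      rw [sup_comm d (A.sup id), ← sup_assoc]
    by_cases hds : d ≤ s ⊔ A.sup id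
    · have : s ⊔ (insert d A).sup id = s ⊔ A.sup id := by
        rw [hsup, sup_eq_left.mpr hds]
      rw [this]
      exact ⟨c, hfin, hch, hsmem, htmem, hbd, hsat, hcard.trans (by simp [Finset.card_insert_of_notMem hd])⟩
    · have hcov : (s ⊔ A.sup id) ⋖ (s ⊔ A.sup id) ⊔ d := covSupAtom hgeo _ _ hdA hds
      rw [hsup]
      refine ⟨insert ((s ⊔ A.sup id) ⊔ d) c, hfin.insert _, ?_, Set.mem_insert_of_mem _ hsmem,
        Set.mem_insert _ _, ?_, ?_, ?_⟩
      · apply hch.insert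
        intro w hw _
        exact Or.inr ((hbd w hw).2.trans le_sup_left)
      · rintro z (rfl | hz)
        · exact ⟨le_sup_left.trans le_sup_left, le_refl _⟩
        · exact ⟨(hbd z hz).1, (hbd z hz).2.trans le_sup_left⟩
      · intro z h1 h2 hcomp
        by_cases hzt : z ≤ s ⊔ A.sup id
        · refine Set.mem_insert_of_mem _ (hsat z h1 hzt ?_)
          intro w hw
          exact hcomp w (Set.mem_insert_of_mem _ hw)
        · have hcs : s ⊔ A.sup id ≤ z := by
            rcases hcomp _ (Set.mem_insert_of_mem _ htmem) with h | h
            · exact absurd h hzt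
            · exact h
          left
          rcases lt_or_eq_of_le hcs with hlt | heq
          · rcases lt_or_eq_of_le h2 with h2' | h2'
            · exact absurd h2' (hcov.2 hlt)
            · exact h2'
          · exact absurd heq.ge hzt
      · calc (insert ((s ⊔ A.sup id) ⊔ d) c).ncard ≤ c.ncard + 1 := Set.ncard_insert_le _ _
          _ ≤ A.card + 1 + 1 := by omega
          _ = (insert d A).card + 1 := by rw [Finset.card_insert_of_notMem hd]

lemma geom_rank_le_card (hgeo : IsGeometricLattice L) (r : ℕ)
    (hrank : ∀ c : Set L, IsMaxChain (· ≤ ·) c → c.ncard = r + 1)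
    (A : Finset L) (hA : ∀ e ∈ A, IsAtom e) (htop : A.sup id = ⊤) : r ≤ A.card := by
  obtain ⟨c, hfin, hch, hsmem, htmem, hbd, hsat, hcard⟩ := satChainExists hgeo A hA ⊥
  have hmax : IsMaxChain (· ≤ ·) c := by
    refine ⟨hch, ?_⟩
    intro t hct hsub
    apply Set.Subset.antisymm hsub
    intro z hz
    refine hsat z bot_le (by simp [htop]) ?_
    intro w hw
    rcases eq_or_ne z w with rfl | hne
    · exact Or.inl le_rfl
    · exact hct hz (hsub hw) hne
  have h := hrank c hmax
  omega

variable {r : ℕ} {f : L → ℕ} {lab : L → L → L}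

lemma step_sup (hlab : IsMinimalLabeling f lab) {g : Fin (r+1) → L} (hg : IsMaxChainFun r g)
    (k : Fin r) : g k.succ = g k.castSucc ⊔ labelSeq lab g k := by
  have hc := hg.2.2 k
  obtain ⟨hat, hle, hnle, -⟩ := hlab _ _ hc
  have h1 : g k.castSucc < g k.castSucc ⊔ labelSeq lab g k := by
    rcases lt_or_eq_of_le (le_sup_left : g k.castSucc ≤ _) with h | h
    · exact h
    · exact absurd (le_sup_right.trans h.ge) hnle
  have h2 : g k.castSucc ⊔ labelSeq lab g k ≤ g k.succ := sup_le hc.le hle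
  rcases lt_or_eq_of_le h2 with h | h
  · exact absurd h (hc.2 h1)
  · exact h.symm

lemma prefix_le_sup (hlab : IsMinimalLabeling f lab) {g : Fin (r+1) → L}
    (hg : IsMaxChainFun r g) :
    ∀ n, ∀ _ : n ≤ r, g ⟨n, by omega⟩ ≤
      (Finset.univ.filter fun k : Fin r => (k : ℕ) < n).sup (labelSeq lab g) := by
  intro n
  induction n with
  | zero =>
    intro hn
    have h0 : (⟨0, by omega⟩ : Fin (r+1)) = 0 := rfl
    rw [h0, hg.1]
    exact bot_le
  | succ n ih =>
    intro hn
    have hn' : n ≤ r := by omega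
    have hk : n < r := by omega
    have hstep := step_sup hlab hg ⟨n, hk⟩
    have hcs : (⟨n, hk⟩ : Fin r).castSucc = (⟨n, by omega⟩ : Fin (r+1)) := rfl
    have hsc : (⟨n, hk⟩ : Fin r).succ = (⟨n+1, by omega⟩ : Fin (r+1)) := rfl
    rw [hcs, hsc] at hstep
    rw [hstep]
    apply sup_le
    · refine (ih hn').trans (Finset.sup_mono ?_)
      intro k hk'
      simp only [Finset.mem_filter, Finset.mem_univ, true_and] at *
      omega
    · apply Finset.le_sup
      simp only [Finset.mem_filter, Finset.mem_univ, true_and]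
      omega

lemma asc_min (hlab : IsMinimalLabeling f lab) {C : Fin (r+1) → L} (hC : IsMaxChainFun r C)
    (hCasc : Monotone fun i => f (labelSeq lab C i)) (e : L) (he : IsAtom e) (j : Fin r)
    (hne : ¬ e ≤ C j.castSucc) : f (labelSeq lab C j) ≤ f e := by
  have main : ∀ n, ∀ _ : n ≤ r, e ≤ C ⟨n, by omega⟩ → (j : ℕ) < n →
      f (labelSeq lab C j) ≤ f e := by
    intro n
    induction n with
    | zero => intro _ _ h; omega
    | succ n ih =>
      intro hn hle hj
      have hk : n < r := by omega
      by_cases hen : e ≤ C ⟨n, by omega⟩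
      · rcases Nat.lt_or_ge (j : ℕ) n with h | h
        · exact ih (by omega) hen h
        · have hjn : (j : ℕ) = n := by omega
          have : j.castSucc = (⟨n, by omega⟩ : Fin (r+1)) := by
            ext; simpa using hjn
          rw [this] at hne
          exact absurd hen hne
      · have hcs : (⟨n, hk⟩ : Fin r).castSucc = (⟨n, by omega⟩ : Fin (r+1)) := rfl
        have hsc : (⟨n, hk⟩ : Fin r).succ = (⟨n+1, by omega⟩ : Fin (r+1)) := rfl
        obtain ⟨-, -, -, hmin⟩ := hlab _ _ (hC.2.2 ⟨n, hk⟩)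
        have hlf : f (labelSeq lab C ⟨n, hk⟩) ≤ f e := by
          apply hmin e he
          · rw [hsc]; exact hle
          · rw [hcs]; exact hen
        have h2 : f (labelSeq lab C j) ≤ f (labelSeq lab C ⟨n, hk⟩) := by
          apply hCasc
          show j ≤ ⟨n, hk⟩
          rw [Fin.le_def]
          simp only [Fin.val_mk]
          omega
        exact h2.trans hlf
  refine main r le_rfl ?_ j.isLt
  have hh : (⟨r, by omega⟩ : Fin (r+1)) = Fin.last r := rfl
  rw [hh, hC.2.1]
  exact le_top

end Aux

set_option maxHeartbeats 1000000 in
/-- Descent swapping lemma: let `M` be a maximal chain of a finite geometric lattice of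
rank `r` with a minimal labeling whose label sequence is a rearrangement of the label
sequence of the unique ascending chain `C`, and suppose `M` has a descent at rank `i`.
Then there is `v` with `M (i-1) ⋖ v ⋖ M (i+1)` whose two labels are the two labels of `M`
there swapped, and `(λ(M(i-1),v), λ(v,M(i+1)))` is the lexicographically smallest label
sequence of any saturated chain from `M (i-1)` to `M (i+1)`. -/
theorem stmt10 (L : Type*) [Lattice L] [Fintype L] [BoundedOrder L] (r : ℕ)
    (hgeo : IsGeometricLattice L)
    (hrank : ∀ c : Set L, IsMaxChain (· ≤ ·) c → c.ncard = r + 1)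
    (f : L → ℕ) (hf : Set.InjOn f {a : L | IsAtom a})
    (lab : L → L → L) (hlab : IsMinimalLabeling f lab)
    (C : Fin (r+1) → L) (hC : IsMaxChainFun r C)
    (hCasc : Monotone fun i => f (labelSeq lab C i))
    (M : Fin (r+1) → L) (hM : IsMaxChainFun r M)
    (σ : Equiv.Perm (Fin r)) (hσ : ∀ i : Fin r, labelSeq lab M i = labelSeq lab C (σ i))
    (i : ℕ) (h1 : 0 < i) (h2 : i < r)
    (hdesc : f (lab (M ⟨i, by omega⟩) (M ⟨i+1, by omega⟩)) <
             f (lab (M ⟨i-1, by omega⟩) (M ⟨i, by omega⟩))) :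
    ∃ v : L, M ⟨i-1, by omega⟩ ⋖ v ∧ v ⋖ M ⟨i+1, by omega⟩ ∧
      lab (M ⟨i-1, by omega⟩) v = lab (M ⟨i, by omega⟩) (M ⟨i+1, by omega⟩) ∧
      lab v (M ⟨i+1, by omega⟩) = lab (M ⟨i-1, by omega⟩) (M ⟨i, by omega⟩) ∧
      ∀ w : L, M ⟨i-1, by omega⟩ ⋖ w → w ⋖ M ⟨i+1, by omega⟩ →
        (toLex (f (lab (M ⟨i-1, by omega⟩) v), f (lab v (M ⟨i+1, by omega⟩))) : ℕ ×ₗ ℕ) ≤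
        toLex (f (lab (M ⟨i-1, by omega⟩) w), f (lab w (M ⟨i+1, by omega⟩))) := by
  classical
  have pm1r : i - 1 < r := Nat.lt_of_le_of_lt (Nat.sub_le i 1) h2
  have pm1r1 : i - 1 < r + 1 := Nat.lt_succ_of_lt pm1r
  have pir1 : i < r + 1 := Nat.lt_succ_of_lt h2
  have pi1r1 : i + 1 < r + 1 := Nat.succ_lt_succ h2
  have hsucc0 : ((⟨i-1, pm1r⟩ : Fin r)).succ = (⟨i, pir1⟩ : Fin (r+1)) :=
    Fin.ext (Nat.succ_pred_eq_of_pos h1)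
  have hcs0 : ((⟨i-1, pm1r⟩ : Fin r)).castSucc = (⟨i-1, pm1r1⟩ : Fin (r+1)) := rfl
  have hcs1 : ((⟨i, h2⟩ : Fin r)).castSucc = (⟨i, pir1⟩ : Fin (r+1)) := rfl
  have hsucc1 : ((⟨i, h2⟩ : Fin r)).succ = (⟨i+1, pi1r1⟩ : Fin (r+1)) := rfl
  obtain ⟨x, hxdef⟩ : ∃ x, M (⟨i-1, pm1r1⟩ : Fin (r+1)) = x := ⟨_, rfl⟩
  obtain ⟨y, hydef⟩ : ∃ y, M (⟨i, pir1⟩ : Fin (r+1)) = y := ⟨_, rfl⟩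
  obtain ⟨z, hzdef⟩ : ∃ z, M (⟨i+1, pi1r1⟩ : Fin (r+1)) = z := ⟨_, rfl⟩
  rw [hxdef, hydef, hzdef] at hdesc ⊢
  have hxy : x ⋖ y := by
    have h := hM.2.2 ⟨i-1, pm1r⟩
    rwa [hcs0, hsucc0, hxdef, hydef] at h
  have hyz : y ⋖ z := by
    have h := hM.2.2 ⟨i, h2⟩
    rwa [hcs1, hsucc1, hydef, hzdef] at h
  set b := lab x y with hbdef
  set a := lab y z with hadef
  have hdesc' : f a < f b := hdesc
  obtain ⟨hbatom, hbley, hbnlex, hbmin⟩ := hlab _ _ hxy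
  obtain ⟨haatom, halez, hanley, hamin⟩ := hlab _ _ hyz
  have hxley : x ≤ y := hxy.le
  have hylez : y ≤ z := hyz.le
  have hanlex : ¬ a ≤ x := fun h => hanley (h.trans hxley)
  set v := x ⊔ a with hvdef
  have hxv : x ⋖ v := covSupAtom hgeo x a haatom hanlex
  have hvlez : v ≤ z := sup_le (hxley.trans hylez) halez
  have hvney : v ≠ y := by
    intro h
    exact hanley (le_of_le_of_eq (le_sup_right : a ≤ x ⊔ a) h)
  have hvz : v ⋖ z := by
    have hylt : y < v ⊔ y := by
      rcases lt_or_eq_of_le (le_sup_right : y ≤ v ⊔ y) with h | h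
      · exact h
      · exact absurd (((le_sup_right : a ≤ x ⊔ a).trans (le_sup_left : v ≤ v ⊔ y)).trans h.ge) hanley
    have hto : v ⊔ y ≤ z := sup_le hvlez hylez
    have heq : v ⊔ y = z := by
      rcases lt_or_eq_of_le hto with h | h
      · exact absurd h (hyz.2 hylt)
      · exact h
    rw [← heq]
    exact (hgeo.2 x v y hvney hxv hxy).1
  have hkey : ∀ e : L, IsAtom e → e ≤ z → ¬ e ≤ x → f a ≤ f e := by
    intro e he hez hex
    by_cases hey : e ≤ y
    · exact le_of_lt (lt_of_lt_of_le hdesc' (hbmin e he hey hex))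
    · exact hamin e he hez hey
  obtain ⟨hlxv_atom, hlxv_le, hlxv_nle, hlxv_min⟩ := hlab _ _ hxv
  have halev : a ≤ v := le_sup_right
  have hlabxv : lab x v = a := by
    have hfe : f (lab x v) = f a :=
      le_antisymm (hlxv_min a haatom halev hanlex)
        (hkey _ hlxv_atom (hlxv_le.trans hvlez) hlxv_nle)
    exact hf hlxv_atom haatom hfe
  have hbnlev : ¬ b ≤ v := by
    intro hbv
    have hxb : x < x ⊔ b := by
      rcases lt_or_eq_of_le (le_sup_left : x ≤ x ⊔ b) with h | h
      · exact h
      · exact absurd (le_sup_right.trans h.ge) hbnlex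
    have hxbv : x ⊔ b ≤ v := sup_le hxv.le hbv
    have hxbe : x ⊔ b = v := by
      rcases lt_or_eq_of_le hxbv with h | h
      · exact absurd h (hxv.2 hxb)
      · exact h
    have hay : a ≤ y := by
      have h : a ≤ x ⊔ b := hxbe ▸ (le_sup_right : a ≤ x ⊔ a)
      exact h.trans (sup_le hxley hbley)
    exact hanley hay
  obtain ⟨hlvz_atom, hlvz_le, hlvz_nle, hlvz_min⟩ := hlab _ _ hvz
  -- the main rearrangement argument
  have hbig : ∀ e : L, IsAtom e → e ≤ z → ¬ e ≤ v → f b ≤ f e := by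
    intro c hc hcz hcv
    have hcx : ¬ c ≤ x := fun h => hcv (h.trans hxv.le)
    by_cases hcy : c ≤ y
    · exact hbmin c hc hcy hcx
    by_contra hlt
    push_neg at hlt
    set t : Fin r := σ ⟨i-1, pm1r⟩ with htdef
    have hbt : b = labelSeq lab C t := by
      have h := hσ ⟨i-1, pm1r⟩
      rw [labelSeq, hcs0, hsucc0, hxdef, hydef] at h
      exact h
    have hct : c ≤ C t.castSucc := by
      by_contra hcc
      have h := asc_min hlab hC hCasc c hc t hcc
      rw [← hbt] at h
      omega
    have hzvc : z = v ⊔ c := by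
      have hvvc : v < v ⊔ c := by
        rcases lt_or_eq_of_le (le_sup_left : v ≤ v ⊔ c) with h | h
        · exact h
        · exact absurd (le_sup_right.trans h.ge) hcv
      have hh : v ⊔ c ≤ z := sup_le hvz.le hcz
      rcases lt_or_eq_of_le hh with h | h
      · exact absurd h (hvz.2 hvvc)
      · exact h.symm
    set B : Finset (Fin r) := Finset.univ.erase t with hBdef
    have hBsup : ∀ k : Fin r, k ≠ t → labelSeq lab C k ≤ B.sup (labelSeq lab C) := fun k hk =>
      Finset.le_sup (Finset.mem_erase.mpr ⟨hk, Finset.mem_univ k⟩)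
    have hxB : x ≤ B.sup (labelSeq lab C) := by
      have hp := prefix_le_sup hlab hM (i-1) (le_of_lt pm1r)
      rw [hxdef] at hp
      refine hp.trans (Finset.sup_le ?_)
      intro k hk
      simp only [Finset.mem_filter, Finset.mem_univ, true_and] at hk
      rw [hσ k]
      apply hBsup
      intro hkt
      have hkeq : k = ⟨i-1, pm1r⟩ := σ.injective hkt
      rw [hkeq] at hk
      simp only [Fin.val_mk] at hk
      omega
    have haB : a ≤ B.sup (labelSeq lab C) := by
      have h1 : a = labelSeq lab C (σ ⟨i, h2⟩) := by
        have h := hσ ⟨i, h2⟩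
        rw [labelSeq, hcs1, hsucc1, hydef, hzdef] at h
        exact h
      rw [h1]
      apply hBsup
      intro h
      have hkeq : (⟨i, h2⟩ : Fin r) = ⟨i-1, pm1r⟩ := σ.injective h
      rw [Fin.mk.injEq] at hkeq
      omega
    have hCtB : C t.castSucc ≤ B.sup (labelSeq lab C) := by
      have hp := prefix_le_sup hlab hC (t : ℕ) (le_of_lt t.isLt)
      have hcst : (⟨(t : ℕ), Nat.lt_succ_of_lt t.isLt⟩ : Fin (r+1)) = t.castSucc := rfl
      rw [hcst] at hp
      refine hp.trans (Finset.sup_le ?_)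
      intro k hk
      simp only [Finset.mem_filter, Finset.mem_univ, true_and] at hk
      apply hBsup
      intro hkeq
      rw [hkeq] at hk
      omega
    have htopB : (⊤ : L) ≤ B.sup (labelSeq lab C) := by
      have hp := prefix_le_sup hlab hC r le_rfl
      have hlast : (⟨r, Nat.lt_succ_self r⟩ : Fin (r+1)) = Fin.last r := rfl
      rw [hlast, hC.2.1] at hp
      have hfilter : (Finset.univ.filter fun k : Fin r => (k : ℕ) < r) = Finset.univ :=
        Finset.filter_true_of_mem (fun k _ => k.isLt)
      rw [hfilter] at hp
      have huniv : (Finset.univ : Finset (Fin r)) = insert t B := by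
        rw [hBdef, Finset.insert_erase (Finset.mem_univ t)]
      rw [huniv, Finset.sup_insert] at hp
      have hbB : labelSeq lab C t ≤ B.sup (labelSeq lab C) := by
        rw [← hbt]
        calc b ≤ z := hbley.trans hylez
          _ = v ⊔ c := hzvc
          _ ≤ B.sup (labelSeq lab C) ⊔ B.sup (labelSeq lab C) :=
              sup_le_sup (by rw [hvdef]; exact sup_le hxB haB) (hct.trans hCtB)
          _ = B.sup (labelSeq lab C) := sup_idem _
      exact hp.trans (sup_le hbB le_rfl)
    set A : Finset L := B.image (labelSeq lab C) with hAdef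
    have hAatoms : ∀ e ∈ A, IsAtom e := by
      intro e heA
      rw [hAdef, Finset.mem_image] at heA
      obtain ⟨k, -, rfl⟩ := heA
      exact (hlab _ _ (hC.2.2 k)).1
    have hAsup : A.sup id = ⊤ := by
      apply le_antisymm le_top
      rw [hAdef, Finset.sup_image]
      exact htopB
    have hcard := geom_rank_le_card hgeo r hrank A hAatoms hAsup
    have hcard2 : A.card ≤ B.card := Finset.card_image_le
    have hcard3 : B.card = r - 1 := by
      rw [hBdef, Finset.card_erase_of_mem (Finset.mem_univ t), Finset.card_univ,
        Fintype.card_fin]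
    omega
  have hlabvz : lab v z = b := by
    have hble : f (lab v z) ≤ f b := hlvz_min b hbatom (hbley.trans hylez) hbnlev
    have hgeq : f b ≤ f (lab v z) := hbig _ hlvz_atom hlvz_le hlvz_nle
    exact hf hlvz_atom hbatom (le_antisymm hble hgeq)
  refine ⟨v, hxv, hvz, hlabxv, hlabvz, ?_⟩
  intro w hxw hwz
  rw [hlabxv, hlabvz]
  rw [Prod.Lex.le_iff]
  obtain ⟨hw_atom, hw_le, hw_nle, hw_min⟩ := hlab _ _ hxw
  have hfa : f a ≤ f (lab x w) := hkey _ hw_atom (hw_le.trans hwz.le) hw_nle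
  rcases lt_or_eq_of_le hfa with h | h
  · exact Or.inl h
  · right
    refine ⟨h, ?_⟩
    have hwa : lab x w = a := hf hw_atom haatom h.symm
    have hvw : v ≤ w := sup_le hxw.le (hwa ▸ hw_le)
    have hveq : v = w := by
      rcases lt_or_eq_of_le hvw with h' | h'
      · exact absurd h' (hxw.2 (hxv.1))
      · exact h'
    rw [← hveq, hlabvz]
    exact le_rfl
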